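/- Let $A$, $B$, $C$ be the vertices of an equilateral triangle inscribed in the unit circle and $\lambda > 4$. Then for every point $M$ on the unit circle, $MA^{\lambda} + MB^{\lambda} + MC^{\lambda} \le 2 + 2^{\lambda}$, with equality exactly when $M$ is the midpoint of one of the arcs between consecutive vertices. -/

import Mathlib

open Real Set

-- Sign pattern of a strictly concave function on [0,∞) with two zeros p < q.
lemma concave_combo {f : ℝ → ℝ} (hf : StrictConcaveOn ℝ (Ici (0:ℝ)) f)
    {x z y : ℝ} (hx : 0 ≤ x) (h1 : x < z) (h2 : z < y) :
    ((y - z)/(y - x)) * f x + ((z - x)/(y - x)) * f y < f z := by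
  have hxy : x < y := h1.trans h2
  have hden : 0 < y - x := by linarith
  have ha : 0 < (y - z)/(y - x) := div_pos (by linarith) hden
  have hb : 0 < (z - x)/(y - x) := div_pos (by linarith) hden
  have hab : (y - z)/(y - x) + (z - x)/(y - x) = 1 := by field_simp; ring
  have hy : (0:ℝ) ≤ y := by linarith
  have h := hf.2 (mem_Ici.mpr hx) (mem_Ici.mpr hy) (by linarith : x ≠ y) ha hb hab
  simp only [smul_eq_mul] at h
  have hz : (y - z)/(y - x) * x + (z - x)/(y - x) * y = z := by
    field_simp
    ring
  rw [hz] at h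
  exact h

lemma concave_signs {f : ℝ → ℝ} (hf : StrictConcaveOn ℝ (Ici (0:ℝ)) f)
    {p q : ℝ} (hp : 0 ≤ p) (hpq : p < q) (h0p : f p = 0) (h0q : f q = 0) :
    (∀ s, p < s → s < q → 0 < f s) ∧ (∀ s, 0 ≤ s → s < p → f s < 0) ∧
      (∀ s, q < s → f s < 0) := by
  refine ⟨fun s hs1 hs2 => ?_, fun s hs0 hs1 => ?_, fun s hs => ?_⟩
  · have h := concave_combo hf hp hs1 hs2
    rw [h0p, h0q] at h
    simpa using h
  · have h := concave_combo hf hs0 hs1 (hpq)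
    rw [h0p, h0q] at h
    have ha : 0 < (q - p)/(q - s) := by
      have : 0 < q - s := by linarith
      have : (0:ℝ) < q - p := by linarith
      positivity
    nlinarith [h, ha]
  · have h := concave_combo hf hp hpq hs
    rw [h0p, h0q] at h
    have hb : 0 < (q - p)/(s - p) := by
      have : 0 < s - p := by linarith
      have : (0:ℝ) < q - p := by linarith
      positivity
    nlinarith [h, hb]

-- Key 1-variable lemma: quadratic tangent at 1 and through (4, 4^μ) dominates s^μ on [0,4].
lemma key_quad (μ a b c : ℝ) (hμ : 2 < μ)
    (h1 : a + b + c = 1) (h2 : 2*a + b = μ) (h3 : 16*a + 4*b + c = (4:ℝ) ^ μ) :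
    ∀ s ∈ Icc (0:ℝ) 4,
      s ^ μ ≤ a*s^2 + b*s + c ∧ (s ^ μ = a*s^2 + b*s + c ↔ s = 1 ∨ s = 4) := by
  set H : ℝ → ℝ := fun s => a*s^2 + b*s + c - s ^ μ with hH
  set D : ℝ → ℝ := fun s => 2*a*s + b - μ * s ^ (μ - 1) with hD
  have hμ1 : (1:ℝ) ≤ μ := by linarith
  have hd : ∀ s : ℝ, HasDerivAt H (D s) s := by
    intro s
    have hr : HasDerivAt (fun x : ℝ => x ^ μ) (μ * s ^ (μ - 1)) s :=
      Real.hasDerivAt_rpow_const (Or.inr hμ1)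
    have hq : HasDerivAt (fun x : ℝ => a * x ^ 2 + b * x + c) (2*a*s + b) s := by
      have ha : HasDerivAt (fun x : ℝ => x ^ 2) ((2:ℕ) * s ^ (2 - 1)) s := hasDerivAt_pow 2 s
      have hb : HasDerivAt (fun x : ℝ => b * x) (b * 1) s := (hasDerivAt_id s).const_mul b
      have : HasDerivAt (fun x : ℝ => a * x ^ 2 + b * x + c)
          (a * ((2:ℕ) * s ^ (2 - 1)) + b * 1) s := ((ha.const_mul a).add hb).add_const c
      convert this using 1
      push_cast
      ring
    exact hq.sub hr
  have hcont : Continuous H :=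
    continuous_iff_continuousAt.mpr fun s => (hd s).differentiableAt.continuousAt
  have H1 : H 1 = 0 := by simp [hH, Real.one_rpow]; linarith
  have H4 : H 4 = 0 := by
    simp only [hH]
    nlinarith [h3]
  have D1 : D 1 = 0 := by simp [hD, Real.one_rpow]; linarith
  -- Rolle on [1,4]
  obtain ⟨ξ, hξ, hDξ0⟩ := exists_deriv_eq_zero (f := H) (by norm_num : (1:ℝ) < 4)
    hcont.continuousOn (H1.trans H4.symm)
  have Dξ : D ξ = 0 := by rw [← (hd ξ).deriv]; exact hDξ0
  obtain ⟨hξ1, hξ4⟩ := hξ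
  -- D is strictly concave on [0,∞)
  have hconc : StrictConcaveOn ℝ (Ici (0:ℝ)) D := by
    refine ⟨convex_Ici 0, fun x hx y hy hxy r t hr ht hrt => ?_⟩
    have hcx := strictConvexOn_rpow (by linarith : (1:ℝ) < μ - 1)
    have h := hcx.2 hx hy hxy hr ht hrt
    simp only [smul_eq_mul] at h ⊢
    have hμ0 : (0:ℝ) < μ := by linarith
    have hmm := mul_lt_mul_of_pos_left h hμ0
    have hb' : b * r + b * t = b := by linear_combination b * hrt
    simp only [hD]
    nlinarith [hmm, hb']
  obtain ⟨hpos, hneg1, hneg2⟩ := concave_signs hconc (by norm_num : (0:ℝ) ≤ 1) hξ1 D1 Dξ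
  -- monotonicity pieces
  have hanti1 : StrictAntiOn H (Icc (0:ℝ) 1) := by
    apply strictAntiOn_of_deriv_neg (convex_Icc 0 1) hcont.continuousOn
    intro x hx
    rw [interior_Icc] at hx
    rw [(hd x).deriv]
    exact hneg1 x hx.1.le hx.2
  have hmono : StrictMonoOn H (Icc (1:ℝ) ξ) := by
    apply strictMonoOn_of_deriv_pos (convex_Icc 1 ξ) hcont.continuousOn
    intro x hx
    rw [interior_Icc] at hx
    rw [(hd x).deriv]
    exact hpos x hx.1 hx.2
  have hanti2 : StrictAntiOn H (Icc ξ (4:ℝ)) := by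
    apply strictAntiOn_of_deriv_neg (convex_Icc ξ 4) hcont.continuousOn
    intro x hx
    rw [interior_Icc] at hx
    rw [(hd x).deriv]
    exact hneg2 x hx.1
  have main : ∀ s ∈ Icc (0:ℝ) 4, (0 ≤ H s) ∧ (H s = 0 ↔ s = 1 ∨ s = 4) := by
    intro s hs
    obtain ⟨hs0, hs4⟩ := hs
    have hcases : (s ≠ 1 ∧ s ≠ 4) → 0 < H s := by
      rintro ⟨hne1, hne4⟩
      rcases lt_or_gt_of_ne hne1 with h | h
      · have := hanti1 (mem_Icc.mpr ⟨hs0, h.le⟩) (mem_Icc.mpr (by norm_num)) h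
        rw [H1] at this; linarith
      · rcases le_or_gt s ξ with h' | h'
        · have := hmono (mem_Icc.mpr ⟨le_refl 1, hξ1.le⟩) (mem_Icc.mpr ⟨h.le, h'⟩) h
          rw [H1] at this; linarith
        · have h4 : s < 4 := lt_of_le_of_ne hs4 hne4
          have := hanti2 (mem_Icc.mpr ⟨h'.le, hs4⟩) (mem_Icc.mpr ⟨hξ4.le, le_refl 4⟩) h4
          rw [H4] at this; linarith
    constructor
    · by_cases h1' : s = 1
      · rw [h1', H1]
      · by_cases h4' : s = 4
        · rw [h4', H4]
        · exact (hcases ⟨h1', h4'⟩).le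
    · constructor
      · intro h0
        by_contra hcon
        push_neg at hcon
        have := hcases hcon
        linarith
      · rintro (rfl | rfl)
        · exact H1
        · exact H4
  intro s hs
  have h := main s hs
  constructor
  · have := h.1
    simp only [hH] at this
    linarith
  · constructor
    · intro he
      apply h.2.mp
      simp only [hH]
      linarith
    · intro he
      have := h.2.mpr he
      simp only [hH] at this
      linarith

-- abstract combination lemma
lemma combine (μ u v w : ℝ) (hμ : 2 < μ)
    (hu : u ∈ Icc (0:ℝ) 4) (hv : v ∈ Icc (0:ℝ) 4) (hw : w ∈ Icc (0:ℝ) 4)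
    (hsum : u + v + w = 6) (hsq : u^2 + v^2 + w^2 = 18) :
    u ^ μ + v ^ μ + w ^ μ ≤ 2 + (4:ℝ) ^ μ ∧
      (u ^ μ + v ^ μ + w ^ μ = 2 + (4:ℝ) ^ μ ↔
        (u = 4 ∧ v = 1 ∧ w = 1) ∨ (u = 1 ∧ v = 4 ∧ w = 1) ∨ (u = 1 ∧ v = 1 ∧ w = 4)) := by
  set a : ℝ := ((4:ℝ) ^ μ - 1 - 3*μ)/9 with ha
  set b : ℝ := μ - 2*a with hb
  set c : ℝ := 1 - μ + a with hc
  have h1 : a + b + c = 1 := by rw [hb, hc]; ring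
  have h2 : 2*a + b = μ := by rw [hb]; ring
  have h3 : 16*a + 4*b + c = (4:ℝ) ^ μ := by rw [hb, hc, ha]; ring
  have K := key_quad μ a b c hμ h1 h2 h3
  obtain ⟨hKu1, hKu2⟩ := K u hu
  obtain ⟨hKv1, hKv2⟩ := K v hv
  obtain ⟨hKw1, hKw2⟩ := K w hw
  have hPsum : (a*u^2 + b*u + c) + (a*v^2 + b*v + c) + (a*w^2 + b*w + c) = 2 + (4:ℝ)^μ := by
    linear_combination a * hsq + b * hsum + 2*h1 + h3
  constructor
  · linarith
  · constructor
    · intro he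
      have e1 : u ^ μ = a*u^2 + b*u + c := by linarith
      have e2 : v ^ μ = a*v^2 + b*v + c := by linarith
      have e3 : w ^ μ = a*w^2 + b*w + c := by linarith
      have c1 := hKu2.mp e1
      have c2 := hKv2.mp e2
      have c3 := hKw2.mp e3
      rcases c1 with rfl | rfl <;> rcases c2 with rfl | rfl <;> rcases c3 with rfl | rfl <;>
        (norm_num at hsum <;> norm_num)
    · rintro (⟨rfl, rfl, rfl⟩ | ⟨rfl, rfl, rfl⟩ | ⟨rfl, rfl, rfl⟩) <;>
        rw [Real.one_rpow] <;> ring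

open scoped RealInnerProductSpace

theorem stmt_8 (A B C : EuclideanSpace ℝ (Fin 2))
    (hA : A ∈ Metric.sphere (0 : EuclideanSpace ℝ (Fin 2)) 1)
    (hB : B ∈ Metric.sphere (0 : EuclideanSpace ℝ (Fin 2)) 1)
    (hC : C ∈ Metric.sphere (0 : EuclideanSpace ℝ (Fin 2)) 1)
    (hAB : dist A B = Real.sqrt 3) (hBC : dist B C = Real.sqrt 3)
    (hCA : dist C A = Real.sqrt 3)
    (lam : ℝ) (hlam : 4 < lam) :
    ∀ M ∈ Metric.sphere (0 : EuclideanSpace ℝ (Fin 2)) 1,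
      dist M A ^ lam + dist M B ^ lam + dist M C ^ lam ≤ 2 + (2 : ℝ) ^ lam ∧
      (dist M A ^ lam + dist M B ^ lam + dist M C ^ lam = 2 + (2 : ℝ) ^ lam ↔
        M = -A ∨ M = -B ∨ M = -C) := by
  have nA : ‖A‖ = 1 := by simpa using hA
  have nB : ‖B‖ = 1 := by simpa using hB
  have nC : ‖C‖ = 1 := by simpa using hC
  have sq3 : Real.sqrt 3 ^ 2 = 3 := Real.sq_sqrt (by norm_num)
  have iAB : ⟪A, B⟫ = -(1/2) := by
    have h := norm_sub_sq_real A B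
    rw [← dist_eq_norm, hAB, sq3, nA, nB] at h
    linarith
  have iBC : ⟪B, C⟫ = -(1/2) := by
    have h := norm_sub_sq_real B C
    rw [← dist_eq_norm, hBC, sq3, nB, nC] at h
    linarith
  have iCA : ⟪C, A⟫ = -(1/2) := by
    have h := norm_sub_sq_real C A
    rw [← dist_eq_norm, hCA, sq3, nC, nA] at h
    linarith
  have iBA : ⟪B, A⟫ = -(1/2) := by rw [real_inner_comm]; exact iAB
  have iCB : ⟪C, B⟫ = -(1/2) := by rw [real_inner_comm]; exact iBC
  have iAC : ⟪A, C⟫ = -(1/2) := by rw [real_inner_comm]; exact iCA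
  have iAA : ⟪A, A⟫ = 1 := by rw [real_inner_self_eq_norm_sq, nA]; norm_num
  have iBB : ⟪B, B⟫ = 1 := by rw [real_inner_self_eq_norm_sq, nB]; norm_num
  have iCC : ⟪C, C⟫ = 1 := by rw [real_inner_self_eq_norm_sq, nC]; norm_num
  have hsum0 : A + B + C = 0 := by
    have e : ⟪A + B + C, A + B + C⟫ = 0 := by
      simp only [inner_add_left, inner_add_right]
      rw [iAA, iBB, iCC, iAB, iBA, iBC, iCB, iCA, iAC]
      norm_num
    exact inner_self_eq_zero.mp e
  have hC2 : C = -(A + B) := eq_neg_of_add_eq_zero_right hsum0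
  intro M hM
  have nM : ‖M‖ = 1 := by simpa using hM
  set p : ℝ := ⟪M, A⟫ with hp
  set q : ℝ := ⟪M, B⟫ with hq
  -- coordinate identities
  have eMM : M 0 * M 0 + M 1 * M 1 = 1 := by
    have h := real_inner_self_eq_norm_sq M
    rw [nM] at h
    simp only [PiLp.inner_apply, RCLike.inner_apply, Fin.sum_univ_two, conj_trivial] at h; linarith
  have eAA' : A 0 * A 0 + A 1 * A 1 = 1 := by
    have h := iAA
    simp only [PiLp.inner_apply, RCLike.inner_apply, Fin.sum_univ_two, conj_trivial] at h; linarith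
  have eBB' : B 0 * B 0 + B 1 * B 1 = 1 := by
    have h := iBB
    simp only [PiLp.inner_apply, RCLike.inner_apply, Fin.sum_univ_two, conj_trivial] at h; linarith
  have eAB' : A 0 * B 0 + A 1 * B 1 = -(1/2) := by
    have h := iAB
    simp only [PiLp.inner_apply, RCLike.inner_apply, Fin.sum_univ_two, conj_trivial] at h; linarith
  have eP : p = M 0 * A 0 + M 1 * A 1 := by
    rw [hp]
    simp [PiLp.inner_apply, RCLike.inner_apply, Fin.sum_univ_two]; ring
  have eQ : q = M 0 * B 0 + M 1 * B 1 := by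
    rw [hq]
    simp [PiLp.inner_apply, RCLike.inner_apply, Fin.sum_univ_two]; ring
  have hpq34 : p^2 + q^2 + p*q = 3/4 := by
    set pp : ℝ := M 1 * A 0 - M 0 * A 1 with hpp
    set qq : ℝ := M 1 * B 0 - M 0 * B 1 with hqq
    have e1 : p^2 + pp^2 = 1 := by
      rw [eP, hpp]
      linear_combination (A 0 * A 0 + A 1 * A 1) * eMM + eAA'
    have e2 : q^2 + qq^2 = 1 := by
      rw [eQ, hqq]
      linear_combination (B 0 * B 0 + B 1 * B 1) * eMM + eBB'
    have e3 : p*q + pp*qq = -(1/2) := by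
      rw [eP, eQ, hpp, hqq]
      linear_combination (A 0 * B 0 + A 1 * B 1) * eMM + eAB'
    have h1' : pp^2 = 1 - p^2 := by linarith
    have h2' : qq^2 = 1 - q^2 := by linarith
    have h3' : pp*qq = -(1/2) - p*q := by linarith
    have e4 : (1 - p^2) * (1 - q^2) = (1/2 + p*q)^2 := by
      rw [← h1', ← h2']
      linear_combination (pp*qq - (1/2 + p*q)) * h3'
    linear_combination (-1 : ℝ) * e4
  -- distances squared
  have iMC : ⟪M, C⟫ = -p - q := by
    rw [hC2, inner_neg_right, inner_add_right, ← hp, ← hq]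
    ring
  have hdu : dist M A ^ 2 = 2 - 2*p := by
    rw [dist_eq_norm, norm_sub_sq_real, nM, nA, ← hp]; ring
  have hdv : dist M B ^ 2 = 2 - 2*q := by
    rw [dist_eq_norm, norm_sub_sq_real, nM, nB, ← hq]; ring
  have hdw : dist M C ^ 2 = 2 + 2*p + 2*q := by
    rw [dist_eq_norm, norm_sub_sq_real, nM, nC, iMC]; ring
  have hpb : |p| ≤ 1 := by
    have h := abs_real_inner_le_norm M A
    rw [nM, nA, ← hp] at h
    simpa using h
  have hqb : |q| ≤ 1 := by
    have h := abs_real_inner_le_norm M B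
    rw [nM, nB, ← hq] at h
    simpa using h
  have hwb : |(-p - q)| ≤ 1 := by
    have h := abs_real_inner_le_norm M C
    rw [nM, nC, iMC] at h
    simpa using h
  set u : ℝ := dist M A ^ 2 with hu
  set v : ℝ := dist M B ^ 2 with hv
  set w : ℝ := dist M C ^ 2 with hw
  have hu4 : u ∈ Icc (0:ℝ) 4 := by
    obtain ⟨h1', h2'⟩ := abs_le.mp hpb
    exact ⟨by rw [hu]; positivity, by rw [hdu]; linarith⟩
  have hv4 : v ∈ Icc (0:ℝ) 4 := by
    obtain ⟨h1', h2'⟩ := abs_le.mp hqb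
    exact ⟨by rw [hv]; positivity, by rw [hdv]; linarith⟩
  have hw4 : w ∈ Icc (0:ℝ) 4 := by
    obtain ⟨h1', h2'⟩ := abs_le.mp hwb
    exact ⟨by rw [hw]; positivity, by rw [hdw]; linarith⟩
  have hsum6 : u + v + w = 6 := by rw [hdu, hdv, hdw]; ring
  have hsq18 : u^2 + v^2 + w^2 = 18 := by
    rw [hdu, hdv, hdw]
    linear_combination 8 * hpq34
  set μ : ℝ := lam / 2 with hμdef
  have hμ : 2 < μ := by rw [hμdef]; linarith
  have hcomb := combine μ u v w hμ hu4 hv4 hw4 hsum6 hsq18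
  have hrwx : ∀ x : ℝ, 0 ≤ x → x ^ lam = (x^2) ^ μ := by
    intro x hx
    rw [hμdef, ← Real.rpow_natCast x 2, ← Real.rpow_mul hx]
    ring_nf
  have ru : dist M A ^ lam = u ^ μ := by rw [hu]; exact hrwx _ dist_nonneg
  have rv : dist M B ^ lam = v ^ μ := by rw [hv]; exact hrwx _ dist_nonneg
  have rw' : dist M C ^ lam = w ^ μ := by rw [hw]; exact hrwx _ dist_nonneg
  have h42 : (4:ℝ) ^ μ = 2 ^ lam := by
    rw [hμdef, show (4:ℝ) = (2:ℝ) ^ (2:ℝ) by norm_num [Real.rpow_two],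
      ← Real.rpow_mul (by norm_num)]
    ring_nf
  rw [ru, rv, rw']
  constructor
  · rw [← h42]
    linarith [hcomb.1]
  · rw [← h42]
    rw [hcomb.2]
    constructor
    · rintro (⟨h4, -, -⟩ | ⟨-, h4, -⟩ | ⟨-, -, h4⟩)
      · left
        rw [hdu] at h4
        have hp1 : p = -1 := by linarith
        have : ‖M + A‖ ^ 2 = 0 := by
          rw [norm_add_sq_real, nM, nA, ← hp, hp1]; ring
        have h0 : M + A = 0 := by
          have := pow_eq_zero_iff (n := 2) (by norm_num) |>.mp this
          exact norm_eq_zero.mp this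
        exact eq_neg_of_add_eq_zero_left h0
      · right; left
        rw [hdv] at h4
        have hq1 : q = -1 := by linarith
        have : ‖M + B‖ ^ 2 = 0 := by
          rw [norm_add_sq_real, nM, nB, ← hq, hq1]; ring
        have h0 : M + B = 0 := by
          have := pow_eq_zero_iff (n := 2) (by norm_num) |>.mp this
          exact norm_eq_zero.mp this
        exact eq_neg_of_add_eq_zero_left h0
      · right; right
        rw [hdw] at h4
        have hc1 : ⟪M, C⟫ = -1 := by rw [iMC]; linarith
        have : ‖M + C‖ ^ 2 = 0 := by
          rw [norm_add_sq_real, nM, nC, hc1]; ring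
        have h0 : M + C = 0 := by
          have := pow_eq_zero_iff (n := 2) (by norm_num) |>.mp this
          exact norm_eq_zero.mp this
        exact eq_neg_of_add_eq_zero_left h0
    · rintro (rfl | rfl | rfl)
      · have hp1 : p = -1 := by rw [hp, inner_neg_left, iAA]
        have hq1 : q = 1/2 := by rw [hq, inner_neg_left, iAB]; norm_num
        refine Or.inl ⟨?_, ?_, ?_⟩
        · rw [hdu, hp1]; norm_num
        · rw [hdv, hq1]; norm_num
        · rw [hdw, hp1, hq1]; norm_num
      · have hp1 : p = 1/2 := by rw [hp, inner_neg_left, iBA]; norm_num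
        have hq1 : q = -1 := by rw [hq, inner_neg_left, iBB]
        refine Or.inr (Or.inl ⟨?_, ?_, ?_⟩)
        · rw [hdu, hp1]; norm_num
        · rw [hdv, hq1]; norm_num
        · rw [hdw, hp1, hq1]; norm_num
      · have hp1 : p = 1/2 := by rw [hp, inner_neg_left, iCA]; norm_num
        have hq1 : q = 1/2 := by rw [hq, inner_neg_left, iCB]; norm_num
        refine Or.inr (Or.inr ⟨?_, ?_, ?_⟩)
        · rw [hdu, hp1]; norm_num
        · rw [hdv, hq1]; norm_num
        · rw [hdw, hp1, hq1]; norm_num
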